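/- arXiv:2105.06287 — 2 statements merged into one kernel-verified Lean document; each statement's English description precedes it below -/
import Mathlib

section
/- For every k0 ∈ M and every k1 ∈ P(k0), setting z0 := min(T(k0) ∩ A_{k1}) (this set is nonempty since it contains k0): (1) T(k0) ∩ A_{k1} = (⋃_{z ∈ P(k0)\P(k1)} y(z)) ∪ {k0} = {z ∈ T(k0) : z ≥ z0}; and (2) T(k0) \ A_{k1} = ⋃_{z ∈ P(k1)} y(z) = {z ∈ T(k0) : z < z0}. -/
open scoped Classical
open Finset MeasureTheory

namespace BSHM

noncomputable section

/-- The set of candidate parents of machine type `i`: types `j ∈ M` with `j > i`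
and a strictly smaller normalized cost rate per capacity unit. -/
def pset (m : ℕ) (g r : ℕ → ℝ) (i : ℕ) : Set ℕ :=
  {j | j ≤ m ∧ i < j ∧ r j / g j < r i / g i}

/-- The parent `p i` of machine type `i` (equal to `0` when the parent is undefined,
since any actual parent has index `≥ 2`). -/
def p (m : ℕ) (g r : ℕ → ℝ) (i : ℕ) : ℕ := sInf (pset m g r i)

/-- `pdef i` asserts that the parent of `i` is defined. -/
def pdef (m : ℕ) (g r : ℕ → ℝ) (i : ℕ) : Prop := (pset m g r i).Nonempty

/-- One step of the parent relation: `b` is the (defined) parent of `a`. -/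
def pstep (m : ℕ) (g r : ℕ → ℝ) (a b : ℕ) : Prop :=
  pdef m g r a ∧ b = p m g r a

/-- `P i`: the set consisting of `i` together with all of its iterated parents. -/
def P (m : ℕ) (g r : ℕ → ℝ) (i : ℕ) : Set ℕ :=
  {z | Relation.ReflTransGen (pstep m g r) i z}

/-- `A i`: the set of nodes in the tree rooted at `i`,
i.e. all `z ∈ M` having `i` as an ancestor (or equal to `i`). -/
def A (m : ℕ) (g r : ℕ → ℝ) (i : ℕ) : Set ℕ :=
  {z | 1 ≤ z ∧ z ≤ m ∧ i ∈ P m g r z}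

/-- `v i`: the lowest-indexed node in the tree rooted at `i`. -/
def v (m : ℕ) (g r : ℕ → ℝ) (i : ℕ) : ℕ := sInf (A m g r i)

/-- `y i`: the younger siblings of `i` (same parent status, smaller index). -/
def y (m : ℕ) (g r : ℕ → ℝ) (i : ℕ) : Set ℕ :=
  {z | 1 ≤ z ∧ z ≤ m ∧ z < i ∧ p m g r z = p m g r i}

/-- `esib i`: the elder siblings of `i`. -/
def esib (m : ℕ) (g r : ℕ → ℝ) (i : ℕ) : Set ℕ :=
  {z | 1 ≤ z ∧ z ≤ m ∧ i < z ∧ p m g r z = p m g r i}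

/-- `T k := {k} ∪ ⋃_{z ∈ P(k)} y(z)`. -/
def T (m : ℕ) (g r : ℕ → ℝ) (k : ℕ) : Set ℕ :=
  {k} ∪ ⋃ z ∈ P m g r k, y m g r z

/-- `T k` as a `Finset` (all relevant nodes lie in `{k} ∪ [1, m]`). -/
def TIcc (m : ℕ) (g r : ℕ → ℝ) (k : ℕ) : Finset ℕ :=
  (insert k (Finset.Icc 1 m)).filter (fun z => z ∈ T m g r k)

end

end BSHM

namespace BSHM

variable {m : ℕ} {g r : ℕ → ℝ}

lemma p_mem {i : ℕ} (h : pdef m g r i) : p m g r i ∈ pset m g r i := Nat.sInf_mem h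

lemma lt_p {i : ℕ} (h : pdef m g r i) : i < p m g r i := (p_mem h).2.1

lemma p_pos {i : ℕ} (h : pdef m g r i) : 0 < p m g r i :=
  lt_of_le_of_lt (Nat.zero_le _) (lt_p h)

lemma pdef_of_ne {i : ℕ} (h : p m g r i ≠ 0) : pdef m g r i := by
  by_contra h'
  rw [pdef, Set.not_nonempty_iff_eq_empty] at h'
  simp [p, h', Nat.sInf_empty] at h

lemma reach_le {a b : ℕ} (h : Relation.ReflTransGen (pstep m g r) a b) : a ≤ b := by
  induction h with
  | refl => exact le_rfl
  | tail h1 h2 ih => exact ih.trans (h2.2 ▸ lt_p h2.1).le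

lemma crossing {x u : ℕ} (hx : pdef m g r x) (hxu : x ≤ u) (hum : u ≤ m)
    (hup : u < p m g r x) : pdef m g r u ∧ p m g r u ≤ p m g r x := by
  rcases eq_or_lt_of_le hxu with rfl | hlt
  · exact ⟨hx, le_rfl⟩
  · have hmem := p_mem hx
    have hnot : u ∉ pset m g r x := Nat.notMem_of_lt_sInf hup
    have hratio : r x / g x ≤ r u / g u := by
      by_contra hc
      push_neg at hc
      exact hnot ⟨hum, hlt, hc⟩
    have hp : p m g r x ∈ pset m g r u :=
      ⟨hmem.1, hup, lt_of_lt_of_le hmem.2.2 hratio⟩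
    exact ⟨⟨_, hp⟩, Nat.sInf_le hp⟩

lemma L0 {z u : ℕ} (hum : u ≤ m) :
    ∀ w, Relation.ReflTransGen (pstep m g r) w z → w ≤ u → u < z →
    pdef m g r u ∧ p m g r u ≤ z := by
  intro w h
  induction h using Relation.ReflTransGen.head_induction_on with
  | refl => intro h1 h2; omega
  | @head a c hstep htail ih =>
    intro hwu huz
    by_cases hc : u < p m g r a
    · obtain ⟨h1, h2⟩ := crossing hstep.1 hwu hum hc
      refine ⟨h1, h2.trans ?_⟩
      exact hstep.2 ▸ reach_le htail
    · push_neg at hc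
      exact ih (hstep.2 ▸ hc) huz

lemma L1 {z u w : ℕ} (hu : u ∈ y m g r z) (hw : w ∈ A m g r z) : u < w := by
  by_contra hc
  push_neg at hc
  obtain ⟨hw1, hwm, hwz⟩ := hw
  obtain ⟨hu1, hum, huz, hps⟩ := hu
  obtain ⟨hdu, hpu⟩ := L0 hum w hwz hc huz
  have h1 := p_pos hdu
  rcases eq_or_ne (p m g r z) 0 with h0 | h0
  · omega
  · have h2 := lt_p (pdef_of_ne h0); omega

lemma reach_total {b c : ℕ} : ∀ a, Relation.ReflTransGen (pstep m g r) a b →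
    Relation.ReflTransGen (pstep m g r) a c →
    Relation.ReflTransGen (pstep m g r) b c ∨ Relation.ReflTransGen (pstep m g r) c b := by
  intro a h1
  induction h1 using Relation.ReflTransGen.head_induction_on with
  | refl => intro h2; exact Or.inl h2
  | head hstep htail ih =>
    intro h2
    rcases h2.cases_head with rfl | ⟨d, hd, hdc⟩
    · exact Or.inr (Relation.ReflTransGen.head hstep htail)
    · rw [hd.2, ← hstep.2] at hdc
      exact ih hdc

-- F3 : if z ∈ P k0 \ P k1 with k1 ∈ P k0, and w ∈ y z, then k1 ∈ P w
lemma F3 {k0 k1 z w : ℕ} (hz : z ∈ P m g r k0) (hz1 : z ∉ P m g r k1)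
    (hk1 : k1 ∈ P m g r k0) (hw : w ∈ y m g r z) : k1 ∈ P m g r w := by
  have htot := reach_total k0 hz hk1
  rcases htot with h | h
  swap
  · exact absurd h hz1
  rcases h.cases_head with rfl | ⟨d, hd, hdk1⟩
  · exact absurd Relation.ReflTransGen.refl hz1
  · -- hd : pstep z d, d = p z
    have hpz : d = p m g r z := hd.2
    have hpw : p m g r w = p m g r z := hw.2.2.2
    have hne : p m g r w ≠ 0 := by
      rw [hpw, ← hpz]
      have := lt_p hd.1
      omega
    have hstep : pstep m g r w d := ⟨pdef_of_ne hne, by rw [hpz, ← hpw]⟩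
    exact Relation.ReflTransGen.head hstep hdk1


section
variable {m : ℕ} {g r : ℕ → ℝ}

/-- `A k1 ⊆ A c` when `c ∈ P k1`. -/
lemma F2 {k1 c w : ℕ} (hw : w ∈ A m g r k1) (hc : c ∈ P m g r k1) : w ∈ A m g r c :=
  ⟨hw.1, hw.2.1, hw.2.2.trans hc⟩

/-- Younger siblings of ancestors of `k1` lie outside `A k1`. -/
lemma F4 {k1 z w : ℕ} (hz : z ∈ P m g r k1) (hw : w ∈ y m g r z) : w ∉ A m g r k1 :=
  fun hA => absurd (L1 hw (F2 hA hz)) (lt_irrefl w)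

end


/-- For every `k0 ∈ M` and every `k1 ∈ P(k0)`, setting
`z0 := min (T(k0) ∩ A(k1))`:
(1) `T(k0) ∩ A(k1) = (⋃_{z ∈ P(k0)\P(k1)} y(z)) ∪ {k0} = {z ∈ T(k0) : z ≥ z0}`;
(2) `T(k0) \ A(k1) = ⋃_{z ∈ P(k1)} y(z) = {z ∈ T(k0) : z < z0}`. -/
theorem statement_4 (m : ℕ) (g r : ℕ → ℝ)
    (hm : 1 ≤ m)
    (hg1 : 0 < g 1) (hr1 : 0 < r 1)
    (hg : ∀ i j, 1 ≤ i → i < j → j ≤ m → g i < g j)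
    (hr : ∀ i j, 1 ≤ i → i < j → j ≤ m → r i < r j) :
    ∀ k0, 1 ≤ k0 → k0 ≤ m → ∀ k1 ∈ P m g r k0,
      (T m g r k0 ∩ A m g r k1
          = (⋃ z ∈ (P m g r k0 \ P m g r k1), y m g r z) ∪ {k0} ∧
       T m g r k0 ∩ A m g r k1
          = {z ∈ T m g r k0 | sInf (T m g r k0 ∩ A m g r k1) ≤ z}) ∧
      (T m g r k0 \ A m g r k1 = ⋃ z ∈ P m g r k1, y m g r z ∧
       T m g r k0 \ A m g r k1
          = {z ∈ T m g r k0 | z < sInf (T m g r k0 ∩ A m g r k1)}) := by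
  intro k0 hk01 hk0m k1 hk1
  have hk0A : k0 ∈ A m g r k1 := ⟨hk01, hk0m, hk1⟩
  have hk0T : k0 ∈ T m g r k0 := Or.inl rfl
  have hA : T m g r k0 ∩ A m g r k1
      = (⋃ z ∈ (P m g r k0 \ P m g r k1), y m g r z) ∪ {k0} := by
    ext w
    constructor
    · rintro ⟨hwT, hwA⟩
      rcases hwT with hw | hw
      · exact Or.inr hw
      · rw [Set.mem_iUnion₂] at hw
        obtain ⟨z, hz, hwz⟩ := hw
        by_cases hz1 : z ∈ P m g r k1
        · exact absurd hwA (F4 hz1 hwz)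
        · exact Or.inl (Set.mem_iUnion₂.mpr ⟨z, ⟨hz, hz1⟩, hwz⟩)
    · rintro (hw | hw)
      · rw [Set.mem_iUnion₂] at hw
        obtain ⟨z, ⟨hz, hz1⟩, hwz⟩ := hw
        refine ⟨Or.inr (Set.mem_iUnion₂.mpr ⟨z, hz, hwz⟩), ?_⟩
        exact ⟨hwz.1, hwz.2.1, F3 hz hz1 hk1 hwz⟩
      · rw [Set.mem_singleton_iff] at hw
        subst hw
        exact ⟨hk0T, hk0A⟩
  have hB : T m g r k0 \ A m g r k1 = ⋃ z ∈ P m g r k1, y m g r z := by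
    ext w
    constructor
    · rintro ⟨hwT, hwA⟩
      rcases hwT with hw | hw
      · rw [Set.mem_singleton_iff] at hw; subst hw; exact absurd hk0A hwA
      · rw [Set.mem_iUnion₂] at hw
        obtain ⟨z, hz, hwz⟩ := hw
        by_cases hz1 : z ∈ P m g r k1
        · exact Set.mem_iUnion₂.mpr ⟨z, hz1, hwz⟩
        · exact absurd ⟨hwz.1, hwz.2.1, F3 hz hz1 hk1 hwz⟩ hwA
    · intro hw
      rw [Set.mem_iUnion₂] at hw
      obtain ⟨z, hz, hwz⟩ := hw
      exact ⟨Or.inr (Set.mem_iUnion₂.mpr ⟨z, hk1.trans hz, hwz⟩), F4 hz hwz⟩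
  have hne : (T m g r k0 ∩ A m g r k1).Nonempty := ⟨k0, hk0T, hk0A⟩
  set z0 := sInf (T m g r k0 ∩ A m g r k1) with hz0def
  have hz0 : z0 ∈ T m g r k0 ∩ A m g r k1 := Nat.sInf_mem hne
  -- elements of T \ A are below z0
  have hbelow : ∀ w ∈ T m g r k0, w ∉ A m g r k1 → w < z0 := by
    intro w hwT hwA
    have hw2 : w ∈ ⋃ z ∈ P m g r k1, y m g r z := hB ▸ Set.mem_diff_of_mem hwT hwA
    rw [Set.mem_iUnion₂] at hw2
    obtain ⟨z, hz, hwz⟩ := hw2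
    exact L1 hwz (F2 hz0.2 hz)
  have hC : T m g r k0 ∩ A m g r k1 = {z ∈ T m g r k0 | z0 ≤ z} := by
    ext w
    constructor
    · intro hw
      exact ⟨hw.1, Nat.sInf_le hw⟩
    · rintro ⟨hwT, hwz0⟩
      refine ⟨hwT, ?_⟩
      by_contra hwA
      exact absurd hwz0 (not_le.mpr (hbelow w hwT hwA))
  have hD : T m g r k0 \ A m g r k1 = {z ∈ T m g r k0 | z < z0} := by
    ext w
    constructor
    · rintro ⟨hwT, hwA⟩
      exact ⟨hwT, hbelow w hwT hwA⟩
    · rintro ⟨hwT, hwz0⟩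
      refine ⟨hwT, fun hwA => ?_⟩
      exact absurd (Nat.sInf_le (Set.mem_inter hwT hwA)) (not_le.mpr hwz0)
  exact ⟨⟨hA, hC⟩, ⟨hB, hD⟩⟩


end BSHM
end

section
/- For every k ∈ M, setting V_k := {k} ∪ ⋃_{z ∈ P(k)} (y(z) ∪ e(z)), one has (P(k) \ {k}) ∪ ⋃_{z ∈ V_k} A_z = M. -/
open scoped Classical
open Finset MeasureTheory

namespace BSHM

lemma pstep_lt {m : ℕ} {g r : ℕ → ℝ} {a b : ℕ} (h : pstep m g r a b) :
    a < b ∧ b ≤ m := by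
  have hb : b ∈ pset m g r a := by rw [h.2]; exact Nat.sInf_mem h.1
  exact ⟨hb.2.1, hb.1⟩

lemma chain_le {m : ℕ} {g r : ℕ → ℝ} {w z : ℕ} (h : z ∈ P m g r w) :
    w ≤ z ∧ (z ≠ w → z ≤ m) := by
  have h' : Relation.ReflTransGen (pstep m g r) w z := h
  clear h
  induction h' with
  | refl => exact ⟨le_rfl, fun h => absurd rfl h⟩
  | tail hab hbc ih =>
      have hlt := pstep_lt hbc
      exact ⟨le_trans ih.1 hlt.1.le, fun _ => hlt.2⟩

lemma exists_top (m : ℕ) (g r : ℕ → ℝ) :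
    ∀ n k, m - k = n → ∃ t, t ∈ P m g r k ∧ ¬ pdef m g r t := by
  intro n
  induction n using Nat.strong_induction_on with
  | _ n ih =>
    intro k hk
    by_cases hd : pdef m g r k
    · have hs : pstep m g r k (p m g r k) := ⟨hd, rfl⟩
      obtain ⟨hlt, hle⟩ := pstep_lt hs
      obtain ⟨t, ht, htd⟩ := ih (m - p m g r k) (by omega) (p m g r k) rfl
      exact ⟨t, Relation.ReflTransGen.head hs ht, htd⟩
    · exact ⟨k, Relation.ReflTransGen.refl, hd⟩

lemma exists_pred {m : ℕ} {g r : ℕ → ℝ} {k z : ℕ}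
    (h : z ∈ P m g r k) (hne : z ≠ k) :
    ∃ u, u ∈ P m g r k ∧ pstep m g r u z := by
  have h' : Relation.ReflTransGen (pstep m g r) k z := h
  rcases Relation.ReflTransGen.cases_tail h' with h1 | ⟨u, hu, hz⟩
  · exact absurd h1 hne
  · exact ⟨u, hu, hz⟩

lemma p_of_not_pdef {m : ℕ} {g r : ℕ → ℝ} {i : ℕ} (h : ¬ pdef m g r i) :
    p m g r i = 0 := by
  have : pset m g r i = ∅ := Set.not_nonempty_iff_eq_empty.mp h
  simp [p, this]

lemma mem_sib {m : ℕ} {g r : ℕ → ℝ} {w u : ℕ}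
    (h1 : 1 ≤ w) (h2 : w ≤ m) (hne : w ≠ u)
    (hp : p m g r w = p m g r u) :
    w ∈ y m g r u ∪ esib m g r u := by
  rcases lt_or_gt_of_ne hne with hlt | hgt
  · exact Or.inl ⟨h1, h2, hlt, hp⟩
  · exact Or.inr ⟨h1, h2, hgt, hp⟩

/-- For every `k ∈ M`, setting
`V_k := {k} ∪ ⋃_{z ∈ P(k)} (y(z) ∪ e(z))`, one has
`(P(k) \ {k}) ∪ ⋃_{z ∈ V_k} A(z) = M`. -/
theorem statement_6 (m : ℕ) (g r : ℕ → ℝ)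
    (hm : 1 ≤ m)
    (hg1 : 0 < g 1) (hr1 : 0 < r 1)
    (hg : ∀ i j, 1 ≤ i → i < j → j ≤ m → g i < g j)
    (hr : ∀ i j, 1 ≤ i → i < j → j ≤ m → r i < r j) :
    ∀ k, 1 ≤ k → k ≤ m →
      (P m g r k \ {k}) ∪
        (⋃ z ∈ ({k} ∪ ⋃ w ∈ P m g r k, (y m g r w ∪ esib m g r w) : Set ℕ),
          A m g r z)
      = Set.Icc 1 m := by
  intro k hk1 hkm
  have key : ∀ n w, m - w = n → 1 ≤ w → w ≤ m →
      w ∈ (P m g r k \ {k}) ∪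
        (⋃ z ∈ ({k} ∪ ⋃ u ∈ P m g r k, (y m g r u ∪ esib m g r u) : Set ℕ),
          A m g r z) := by
    intro n
    induction n using Nat.strong_induction_on with
    | _ n ih =>
      intro w hn hw1 hwm
      by_cases hwP : w ∈ P m g r k
      · by_cases hwk : w = k
        · subst hwk
          exact Or.inr (Set.mem_biUnion (Set.mem_union_left _ rfl)
            ⟨hw1, hwm, Relation.ReflTransGen.refl⟩)
        · exact Or.inl ⟨hwP, hwk⟩
      · by_cases hd : pdef m g r w
        · have hs : pstep m g r w (p m g r w) := ⟨hd, rfl⟩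
          obtain ⟨hwb, hbm⟩ := pstep_lt hs
          by_cases hbP : p m g r w ∈ P m g r k
          · by_cases hbk : p m g r w = k
            · refine Or.inr (Set.mem_biUnion (Set.mem_union_left _ rfl)
                ⟨hw1, hwm, ?_⟩)
              have : Relation.ReflTransGen (pstep m g r) w (p m g r w) :=
                Relation.ReflTransGen.single hs
              rwa [hbk] at this
            · obtain ⟨u, huP, hus⟩ := exists_pred hbP hbk
              have hwu : w ≠ u := fun h => hwP (h ▸ huP)
              have hpu : p m g r w = p m g r u := hus.2
              exact Or.inr (Set.mem_biUnion
                (Set.mem_union_right _ (Set.mem_biUnion huP (mem_sib hw1 hwm hwu hpu)))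
                ⟨hw1, hwm, Relation.ReflTransGen.refl⟩)
          · have hb1 : 1 ≤ p m g r w := by omega
            rcases ih (m - p m g r w) (by omega) (p m g r w) rfl hb1 hbm with hL | hR
            · exact absurd hL.1 hbP
            · obtain ⟨z, hzV, hzA⟩ := Set.mem_iUnion₂.mp hR
              exact Or.inr (Set.mem_biUnion hzV
                ⟨hw1, hwm, Relation.ReflTransGen.head hs hzA.2.2⟩)
        · obtain ⟨t, htP, htd⟩ := exists_top m g r (m - k) k rfl
          have hwt : w ≠ t := fun h => hwP (h ▸ htP)
          have hpe : p m g r w = p m g r t := by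
            rw [p_of_not_pdef hd, p_of_not_pdef htd]
          exact Or.inr (Set.mem_biUnion
            (Set.mem_union_right _ (Set.mem_biUnion htP (mem_sib hw1 hwm hwt hpe)))
            ⟨hw1, hwm, Relation.ReflTransGen.refl⟩)
  ext w
  simp only [Set.mem_Icc]
  constructor
  · rintro (hL | hR)
    · obtain ⟨hle, hm'⟩ := chain_le hL.1
      exact ⟨le_trans hk1 hle, hm' hL.2⟩
    · obtain ⟨z, hzV, hzA⟩ := Set.mem_iUnion₂.mp hR
      exact ⟨hzA.1, hzA.2.1⟩
  · rintro ⟨h1, h2⟩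
    exact key (m - w) w rfl h1 h2

end BSHM
end
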